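/- Let P = (X, ≤) be a chain complete N-free poset with at least two elements. Then either P is a disjoint sum of at least two nonempty parts (i.e., there exists a nonempty proper subset A of X such that no element of A is comparable to any element of X \ A), or P is a linear sum of at least two nonempty parts (i.e., there exists a nonempty proper subset A of X such that every element of A is strictly below every element of X \ A). -/

import Mathlib

/-- `(a,b,c,d)` is an `N` in the poset: the four elements are distinct, `a < b`, `c < b`,
`c < d`, and these are the only comparabilities among them. -/
def IsN {X : Type*} [PartialOrder X] (a b c d : X) : Prop :=
  a ≠ b ∧ a ≠ c ∧ a ≠ d ∧ b ≠ c ∧ b ≠ d ∧ c ≠ d ∧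
  a < b ∧ c < b ∧ c < d ∧
  (¬ a ≤ c ∧ ¬ c ≤ a) ∧ (¬ a ≤ d ∧ ¬ d ≤ a) ∧ (¬ b ≤ d ∧ ¬ d ≤ b)

/-- A poset is `N`-free if it contains no `N`. -/
def NFree (X : Type*) [PartialOrder X] : Prop :=
  ∀ a b c d : X, ¬ IsN a b c d

/-- `inc(x)`: the set of elements incomparable to `x`. -/
def incP {X : Type*} [PartialOrder X] (x : X) : Set X :=
  {y | ¬ x ≤ y ∧ ¬ y ≤ x}

/-- The comparability graph of a poset. -/
def compGraph (X : Type*) [PartialOrder X] : SimpleGraph X where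
  Adj u v := u < v ∨ v < u
  symm := by constructor; intro u v h; exact Or.symm h
  loopless := by constructor; intro u h; rcases h with h | h <;> exact lt_irrefl u h

/-- `A` is a module of the poset: every element outside `A` relates in the same way
to all elements of `A`. -/
def PModule {X : Type*} [PartialOrder X] (A : Set X) : Prop :=
  ∀ v ∉ A, ∀ a ∈ A, ∀ a' ∈ A, (v < a → v < a') ∧ (a < v → a' < v)

/-- `C⁺_x`: elements above `x` comparable to all elements of `inc(x)`. -/
def Cplus {X : Type*} [PartialOrder X] (x : X) : Set X :=
  {y | x < y ∧ ∀ z ∈ incP x, (y ≤ z ∨ z ≤ y)}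

/-- `C⁻_x`: elements below `x` comparable to all elements of `inc(x)`. -/
def Cminus {X : Type*} [PartialOrder X] (x : X) : Set X :=
  {y | y < x ∧ ∀ z ∈ incP x, (y ≤ z ∨ z ≤ y)}

/-- A poset is chain complete if every nonempty chain has a supremum and an infimum. -/
def ChainComplete (X : Type*) [PartialOrder X] : Prop :=
  ∀ C : Set X, C.Nonempty → IsChain (· ≤ ·) C → (∃ s, IsLUB C s) ∧ (∃ i, IsGLB C i)

theorem chainComplete_nfree_disjoint_or_linear_sum
    {X : Type*} [PartialOrder X] [Nontrivial X]
    (hcc : ChainComplete X) (hN : NFree X) :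
    (∃ A : Set X, A.Nonempty ∧ A ≠ Set.univ ∧
        ∀ a ∈ A, ∀ b ∉ A, ¬ a ≤ b ∧ ¬ b ≤ a) ∨
    (∃ A : Set X, A.Nonempty ∧ A ≠ Set.univ ∧
        ∀ a ∈ A, ∀ b ∉ A, a < b) := by
  classical
  by_cases hconn : ∀ u v : X, Relation.ReflTransGen (fun a b : X => a < b ∨ b < a) u v
  · -- comparability graph connected: produce a linear sum
    right
    have hcp : ∃ x : X, (Cplus x).Nonempty := by
      by_contra hcp
      have hCp : ∀ x y : X, y ∉ Cplus x := fun x y hy => hcp ⟨x, y, hy⟩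
      -- find a comparable pair
      obtain ⟨a0, b0, hab0⟩ := exists_pair_ne X
      have hedge : ∃ u v : X, u < v := by
        rcases (hconn a0 b0).cases_head with heq | ⟨c, hc, -⟩
        · exact absurd heq hab0
        · rcases hc with h | h
          · exact ⟨a0, c, h⟩
          · exact ⟨c, a0, h⟩
      obtain ⟨x₀, y₀, hxy⟩ := hedge
      have hchain : IsChain (· ≤ ·) ({x₀, y₀} : Set X) := by
        intro a ha b hb hab
        simp only [Set.mem_insert_iff, Set.mem_singleton_iff] at ha hb
        rcases ha with rfl | rfl <;> rcases hb with rfl | rfl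
        · exact absurd rfl hab
        · exact Or.inl hxy.le
        · exact Or.inr hxy.le
        · exact absurd rfl hab
      obtain ⟨C, hC, hsub⟩ := hchain.exists_maxChain
      have hx₀C : x₀ ∈ C := hsub (Set.mem_insert _ _)
      have hy₀C : y₀ ∈ C := hsub (Set.mem_insert_of_mem _ rfl)
      obtain ⟨⟨m, hm⟩, ⟨p, hp⟩⟩ := hcc C ⟨x₀, hx₀C⟩ hC.1
      have hmmax : ∀ w : X, ¬ m < w := by
        intro w hw
        have hins : IsChain (· ≤ ·) (insert w C) :=
          hC.1.insert (fun b hb _ => Or.inr ((hm.1 hb).trans hw.le))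
        have heq := hC.2 hins (Set.subset_insert _ _)
        have hwC : w ∈ C := by
          have hmem : w ∈ insert w C := Set.mem_insert _ _
          rwa [← heq] at hmem
        exact hw.not_ge (hm.1 hwC)
      have hpmin : ∀ w : X, ¬ w < p := by
        intro w hw
        have hins : IsChain (· ≤ ·) (insert w C) :=
          hC.1.insert (fun b hb _ => Or.inl (hw.le.trans (hp.1 hb)))
        have heq := hC.2 hins (Set.subset_insert _ _)
        have hwC : w ∈ C := by
          have hmem : w ∈ insert w C := Set.mem_insert _ _
          rwa [← heq] at hmem
        exact hw.not_ge (hp.1 hwC)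
      have hpm : p < m := lt_of_le_of_lt (hp.1 hx₀C) (lt_of_lt_of_le hxy (hm.1 hy₀C))
      -- a common incomparable witness for p and m
      have h1 : ¬ ∀ w ∈ incP p, m ≤ w ∨ w ≤ m := fun h => hCp p m ⟨hpm, h⟩
      push_neg at h1
      obtain ⟨z, hz, hz1, hz2⟩ := h1
      set S : Set X := {y | y ≤ m ∨ p ≤ y} with hSdef
      have hzS : z ∉ S := fun h => h.elim (fun h' => hz2 h') (fun h' => hz.1 h')
      have hmS : m ∈ S := Or.inl le_rfl
      have key : ∀ {u v : X}, Relation.ReflTransGen (fun a b : X => a < b ∨ b < a) u v →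
          u ∈ S → v ∉ S → ∃ s ∈ S, ∃ t, t ∉ S ∧ (s < t ∨ t < s) := by
        intro u v h
        induction h with
        | refl => exact fun hu hv => absurd hu hv
        | @tail b c hub hbc ih =>
          intro hu hv
          by_cases hbS : b ∈ S
          · exact ⟨b, hbS, c, hv, hbc⟩
          · exact ih hu hbS
      obtain ⟨s, hsS, t, htS, hst⟩ := key (hconn m z) hmS hzS
      have ht1 : ¬ t ≤ m := fun h => htS (Or.inl h)
      have ht2 : ¬ p ≤ t := fun h => htS (Or.inr h)
      have ht3 : ¬ m ≤ t := fun h =>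
        h.lt_or_eq.elim (hmmax t) (fun e => ht1 (le_of_eq e.symm))
      have ht4 : ¬ t ≤ p := fun h =>
        h.lt_or_eq.elim (hpmin t) (fun e => ht2 (le_of_eq e.symm))
      rcases hst with hlt | hlt
      · -- s < t : (p, m, s, t) is an N
        have hsm : s ≤ m := by
          rcases hsS with h | h
          · exact h
          · exact absurd (h.trans hlt.le) ht2
        have hsm' : s < m := hsm.lt_of_ne (fun e => hmmax t (e ▸ hlt))
        have hps1 : ¬ p ≤ s := fun h => ht2 (h.trans hlt.le)
        have hps2 : ¬ s ≤ p := fun h =>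
          h.lt_or_eq.elim (hpmin s) (fun e => hps1 (le_of_eq e.symm))
        exact hN p m s t ⟨hpm.ne, fun e => hps1 (le_of_eq e), fun e => ht2 (le_of_eq e),
          hsm'.ne', fun e => ht3 (le_of_eq e), hlt.ne, hpm, hsm', hlt,
          ⟨hps1, hps2⟩, ⟨ht2, ht4⟩, ⟨ht3, ht1⟩⟩
      · -- t < s : (t, s, p, m) is an N
        have hps : p ≤ s := by
          rcases hsS with h | h
          · exact absurd (hlt.le.trans h) ht1
          · exact h
        have hps' : p < s := hps.lt_of_ne (fun e => ht4 (hlt.le.trans (le_of_eq e.symm)))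
        have hsm1 : ¬ s ≤ m := fun h => ht1 (hlt.le.trans h)
        have hsm2 : ¬ m ≤ s := fun h =>
          h.lt_or_eq.elim (hmmax s) (fun e => hsm1 (le_of_eq e.symm))
        exact hN t s p m ⟨hlt.ne, fun e => ht4 (le_of_eq e), fun e => ht1 (le_of_eq e),
          hps'.ne', fun e => hsm1 (le_of_eq e), hpm.ne, hlt, hps', hpm,
          ⟨ht4, ht2⟩, ⟨ht1, ht3⟩, ⟨hsm1, hsm2⟩⟩
    -- now build the linear cut from a nonempty Cplus
    obtain ⟨x, y, hy⟩ := hcp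
    refine ⟨(Cplus x)ᶜ, ⟨x, fun h => lt_irrefl x h.1⟩,
      fun h => Set.eq_univ_iff_forall.mp h y hy, ?_⟩
    intro a ha b hb
    have hb' : b ∈ Cplus x := not_not.mp hb
    by_cases hax : a ≤ x
    · exact hax.trans_lt hb'.1
    by_cases hxa : x ≤ a
    · -- x < a, a not in Cplus x: find the witness and derive N if a ≮ b
      have hxalt : x < a := hxa.lt_of_ne (fun e => hax (le_of_eq e.symm))
      have h2 : ¬ ∀ w ∈ incP x, a ≤ w ∨ w ≤ a := fun h => ha ⟨hxalt, h⟩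
      push_neg at h2
      obtain ⟨w, hw, hw3, hw4⟩ := h2
      have hwb : w < b := by
        rcases hb'.2 w hw with h | h
        · exact absurd (hb'.1.le.trans h) hw.1
        · exact h.lt_of_ne (by rintro rfl; exact hw.1 hb'.1.le)
      by_contra hab
      have hab1 : ¬ a ≤ b := fun h => hab (h.lt_of_ne (by rintro rfl; exact ha hb'))
      have hab2 : ¬ b ≤ a := fun h => hw4 (hwb.le.trans h)
      exact hN w b x a ⟨hwb.ne, fun e => hw.2 (le_of_eq e), fun e => hw4 (le_of_eq e),
        hb'.1.ne', fun e => hab2 (le_of_eq e), hxalt.ne, hwb, hb'.1, hxalt,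
        ⟨hw.2, hw.1⟩, ⟨hw4, hw3⟩, ⟨hab2, hab1⟩⟩
    · -- a incomparable to x
      rcases hb'.2 a ⟨hxa, hax⟩ with h | h
      · exact absurd (hb'.1.le.trans h) hxa
      · exact h.lt_of_ne (by rintro rfl; exact hxa hb'.1.le)
  · -- comparability graph disconnected: disjoint sum
    left
    push_neg at hconn
    obtain ⟨u, v, huv⟩ := hconn
    refine ⟨{y | Relation.ReflTransGen (fun a b : X => a < b ∨ b < a) u y},
      ⟨u, Relation.ReflTransGen.refl⟩, fun h => huv (Set.eq_univ_iff_forall.mp h v), ?_⟩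
    intro a ha b hb
    constructor
    · intro h
      rcases h.lt_or_eq with h' | h'
      · exact hb (ha.tail (Or.inl h'))
      · exact hb (h' ▸ ha)
    · intro h
      rcases h.lt_or_eq with h' | h'
      · exact hb (ha.tail (Or.inr h'))
      · exact hb (h'.symm ▸ ha)
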